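/- A pre-F-frame {g_i} for X_F with respect to Θ_F is an F-frame (i.e., admits an F-bounded left inverse V : Θ_F → X_F of the analysis operator U with VUf = f) if and only if there exists an F-bounded projection from Θ_F onto the range R(U) of U. -/

import Mathlib

open Filter Topology

noncomputable section

def IsNormOn {X : Type*} [AddCommGroup X] [Module ℝ X] (S : Set X) (N : X → ℝ) : Prop :=
  (0 : X) ∈ S ∧ (∀ c ∈ S, ∀ d ∈ S, c + d ∈ S) ∧ (∀ (a : ℝ), ∀ c ∈ S, a • c ∈ S) ∧
  (∀ c ∈ S, 0 ≤ N c) ∧ (∀ c ∈ S, N c = 0 → c = 0) ∧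
  (∀ c ∈ S, ∀ d ∈ S, N (c + d) ≤ N c + N d) ∧
  (∀ (a : ℝ), ∀ c ∈ S, N (a • c) = |a| * N c)

def IsBanachOn {X : Type*} [AddCommGroup X] [Module ℝ X] (S : Set X) (N : X → ℝ) : Prop :=
  IsNormOn S N ∧ ∀ u : ℕ → X, (∀ n, u n ∈ S) →
    (∀ ε > 0, ∃ M, ∀ m ≥ M, ∀ n ≥ M, N (u m - u n) < ε) →
    ∃ x ∈ S, Tendsto (fun n => N (u n - x)) atTop (nhds 0)

def IsBKOn (S : Set (ℕ → ℝ)) (N : (ℕ → ℝ) → ℝ) : Prop :=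
  IsBanachOn S N ∧ ∀ i, ∃ K : ℝ, ∀ c ∈ S, |c i| ≤ K * N c

def IsScale {X : Type*} [AddCommGroup X] [Module ℝ X] (S : ℕ → Set X) (N : ℕ → X → ℝ) : Prop :=
  (∀ s, IsBanachOn (S s) (N s)) ∧ (∀ s, S (s+1) ⊆ S s) ∧
  (∀ s, ∀ f ∈ S (s+1), N s f ≤ N (s+1) f) ∧
  (∀ s, ∀ f ∈ S s, ∀ ε > 0, ∃ h ∈ ⋂ t, S t, N s (f - h) < ε)

/-- a pre-F-frame is an F-frame (admits an F-bounded left inverse `V` of the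
analysis operator `U`) iff there is an F-bounded projection from `Θ_F` onto the range of
`U`. -/
theorem Fframe_iff_Fbounded_projection
    {X : Type*} [AddCommGroup X] [Module ℝ X]
    (S : ℕ → Set X) (N : ℕ → X → ℝ) (hX : IsScale S N)
    (T : ℕ → Set (ℕ → ℝ)) (NT : ℕ → (ℕ → ℝ) → ℝ) (hT : IsScale T NT)
    (hBK : ∀ s, ∀ i, ∃ K : ℝ, ∀ c ∈ T s, |c i| ≤ K * NT s c)
    (g : ℕ → X →ₗ[ℝ] ℝ) (A B : ℕ → ℝ)
    (hA : ∀ s, 0 < A s) (hAB : ∀ s, A s ≤ B s)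
    (hframe : ∀ f ∈ ⋂ s, S s, (fun i => g i f) ∈ ⋂ s, T s ∧
      ∀ s, A s * N s f ≤ NT s (fun i => g i f) ∧ NT s (fun i => g i f) ≤ B s * N s f) :
    (∃ V : (ℕ → ℝ) →ₗ[ℝ] X,
      (∀ c ∈ ⋂ s, T s, V c ∈ ⋂ s, S s) ∧
      (∀ s, ∃ K : ℝ, ∀ c ∈ ⋂ t, T t, N s (V c) ≤ K * NT s c) ∧
      (∀ f ∈ ⋂ s, S s, V (fun i => g i f) = f))
    ↔
    (∃ P : (ℕ → ℝ) →ₗ[ℝ] (ℕ → ℝ),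
      (∀ c ∈ ⋂ s, T s, ∃ f ∈ ⋂ s, S s, P c = fun i => g i f) ∧
      (∀ s, ∃ K : ℝ, ∀ c ∈ ⋂ t, T t, NT s (P c) ≤ K * NT s c) ∧
      (∀ f ∈ ⋂ s, S s, P (fun i => g i f) = fun i => g i f)) := by
  classical
  have hSnorm : ∀ s, IsNormOn (S s) (N s) := fun s => (hX.1 s).1
  have hTnorm : ∀ s, IsNormOn (T s) (NT s) := fun s => (hT.1 s).1
  have hNT0 : ∀ s, NT s 0 = 0 := by
    intro s
    have h := (hTnorm s).2.2.2.2.2.2 0 0 (hTnorm s).1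
    simpa using h
  have hTnn : ∀ s, ∀ c ∈ T s, 0 ≤ NT s c := fun s => (hTnorm s).2.2.2.1
  have hSsub : ∀ f ∈ ⋂ s, S s, ∀ h ∈ ⋂ s, S s, f - h ∈ ⋂ s, S s := by
    intro f hf h hh
    rw [Set.mem_iInter] at *
    intro s
    have := (hSnorm s).2.1 f (hf s) ((-1 : ℝ) • h) ((hSnorm s).2.2.1 (-1) h (hh s))
    simpa [sub_eq_add_neg] using this
  have hSadd : ∀ f ∈ ⋂ s, S s, ∀ h ∈ ⋂ s, S s, f + h ∈ ⋂ s, S s := by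
    intro f hf h hh
    rw [Set.mem_iInter] at *
    intro s
    exact (hSnorm s).2.1 f (hf s) h (hh s)
  have hSsmul : ∀ (a : ℝ), ∀ f ∈ ⋂ s, S s, a • f ∈ ⋂ s, S s := by
    intro a f hf
    rw [Set.mem_iInter] at *
    intro s
    exact (hSnorm s).2.2.1 a f (hf s)
  have hinj : ∀ f ∈ ⋂ s, S s, (fun i => g i f) = 0 → f = 0 := by
    intro f hf h0
    have h1 := ((hframe f hf).2 0).1
    rw [h0, hNT0 0] at h1
    have hfS : f ∈ S 0 := Set.mem_iInter.mp hf 0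
    have hnn := (hSnorm 0).2.2.2.1 f hfS
    have hA0 := hA 0
    have hN0 : N 0 f = 0 := by nlinarith
    exact (hSnorm 0).2.2.2.2.1 f hfS hN0
  constructor
  · rintro ⟨V, hV1, hV2, hV3⟩
    refine ⟨(LinearMap.pi g).comp V, ?_, ?_, ?_⟩
    · intro c hc
      exact ⟨V c, hV1 c hc, rfl⟩
    · intro s
      obtain ⟨K, hK⟩ := hV2 s
      refine ⟨B s * K, ?_⟩
      intro c hc
      have hVc := hV1 c hc
      have h2 := ((hframe (V c) hVc).2 s).2
      have h3 := hK c hc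
      have hBpos : 0 < B s := lt_of_lt_of_le (hA s) (hAB s)
      have : NT s (fun i => g i (V c)) ≤ B s * (K * NT s c) := by nlinarith
      calc NT s ((LinearMap.pi g).comp V c) = NT s (fun i => g i (V c)) := rfl
        _ ≤ B s * (K * NT s c) := this
        _ = B s * K * NT s c := by ring
    · intro f hf
      show (fun i => g i (V (fun i => g i f))) = fun i => g i f
      rw [hV3 f hf]
  · rintro ⟨P, hP1, hP2, hP3⟩
    set Θ : Submodule ℝ (ℕ → ℝ) :=
      { carrier := ⋂ s, T s
        add_mem' := by
          intro a b ha hb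
          rw [Set.mem_iInter] at *
          exact fun s => (hTnorm s).2.1 a (ha s) b (hb s)
        zero_mem' := by
          rw [Set.mem_iInter]
          exact fun s => (hTnorm s).1
        smul_mem' := by
          intro a c hc
          rw [Set.mem_iInter] at *
          exact fun s => (hTnorm s).2.2.1 a c (hc s) } with hΘ
    have hex : ∀ c : Θ, ∃ f, f ∈ ⋂ s, S s ∧ P c = fun i => g i f := by
      intro c
      obtain ⟨f, hf, h⟩ := hP1 c c.2
      exact ⟨f, hf, h⟩
    choose F hF1 hF2 using hex
    have huniq : ∀ (c : Θ) (f : X), f ∈ ⋂ s, S s → P c = (fun i => g i f) → F c = f := by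
      intro c f hf h
      have hsub : F c - f ∈ ⋂ s, S s := hSsub _ (hF1 c) _ hf
      have h0 : (fun i => g i (F c - f)) = 0 := by
        funext i
        have := congrFun ((hF2 c).symm.trans h) i
        simp only [map_sub]
        simpa using sub_eq_zero.mpr this
      have := hinj _ hsub h0
      exact sub_eq_zero.mp this
    set V0 : Θ →ₗ[ℝ] X :=
      { toFun := F
        map_add' := by
          intro c d
          refine huniq (c + d) (F c + F d) (hSadd _ (hF1 c) _ (hF1 d)) ?_
          have : P ((c + d : Θ) : ℕ → ℝ) = P c + P d := by
            push_cast
            rw [map_add]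
          rw [this, hF2 c, hF2 d]
          funext i
          simp [map_add]
        map_smul' := by
          intro a c
          refine huniq (a • c) (a • F c) (hSsmul a _ (hF1 c)) ?_
          have : P ((a • c : Θ) : ℕ → ℝ) = a • P c := by
            push_cast
            rw [map_smul]
          rw [this, hF2 c]
          funext i
          simp [map_smul] } with hV0
    obtain ⟨V, hV⟩ := V0.exists_extend
    have hVeq : ∀ c : Θ, V (c : ℕ → ℝ) = F c := by
      intro c
      have := congrFun (congrArg DFunLike.coe hV) c
      exact this
    refine ⟨V, ?_, ?_, ?_⟩
    · intro c hc
      rw [hVeq ⟨c, hc⟩]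
      exact hF1 _
    · intro s
      obtain ⟨K, hK⟩ := hP2 s
      refine ⟨K / A s, ?_⟩
      intro c hc
      rw [hVeq ⟨c, hc⟩]
      have hf := hF1 ⟨c, hc⟩
      have h1 := ((hframe _ hf).2 s).1
      rw [← hF2 ⟨c, hc⟩] at h1
      have h2 := hK c hc
      have hAs := hA s
      rw [div_mul_eq_mul_div, le_div_iff₀ hAs]
      nlinarith
    · intro f hf
      have hUf : (fun i => g i f) ∈ ⋂ s, T s := (hframe f hf).1
      rw [hVeq ⟨_, hUf⟩]
      exact huniq ⟨_, hUf⟩ f hf (hP3 f hf)
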